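/- Let M be a symmetric positive definite N×N real matrix and H(x) = √⟨Mx,x⟩. Let T_H(x) = Mx/⟨Mx,x⟩ on ℝ^N∖{0} and let J(x) = |det(DT_H(x))| denote the absolute value of the Jacobian determinant of T_H at x. Then J(x) = det(M)/H(x)^{2N} for every x ∈ ℝ^N∖{0}. -/

import Mathlib

open Matrix

lemma vecMulVec_mulVec_apply {n : ℕ} (u w v : Fin n → ℝ) (i : Fin n) :
    (vecMulVec u w).mulVec v i = u i * (w ⬝ᵥ v) := by
  simp [vecMulVec_apply, Matrix.mulVec, dotProduct, Finset.mul_sum, mul_assoc]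

/- STATEMENT 3: For H(x) = √⟨Mx,x⟩ with M symmetric positive definite, the Jacobian
   determinant of the Kelvin map T_H(x) = Mx/⟨Mx,x⟩ satisfies
   J(x) = |det DT_H(x)| = det M / H(x)^{2N} for every x ≠ 0. -/
theorem kelvin_map_jacobian_determinant {N : ℕ}
    (M : Matrix (Fin N) (Fin N) ℝ) (hM : M.PosDef)
    (H : (Fin N → ℝ) → ℝ) (hH : ∀ x, H x = Real.sqrt (M.mulVec x ⬝ᵥ x))
    (T : (Fin N → ℝ) → (Fin N → ℝ))
    (hT : ∀ x, T x = (M.mulVec x ⬝ᵥ x)⁻¹ • M.mulVec x) :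
    ∀ x : Fin N → ℝ, x ≠ 0 →
      |LinearMap.det (fderiv ℝ T x : (Fin N → ℝ) →ₗ[ℝ] (Fin N → ℝ))| =
        M.det / H x ^ (2 * N) := by
  intro x hx
  have hsymm : Mᵀ = M := hM.1
  set q : ℝ := M.mulVec x ⬝ᵥ x with hq_def
  have hq : 0 < q := by
    have h := hM.re_dotProduct_pos hx
    simpa [hq_def, dotProduct_comm] using h
  -- the linear map `v ↦ M v`
  set G : (Fin N → ℝ) →L[ℝ] (Fin N → ℝ) :=
    LinearMap.toContinuousLinearMap M.mulVecLin with hG_def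
  have hGapp : ∀ v, G v = M.mulVec v := fun v => rfl
  have hg : HasFDerivAt M.mulVec G x := G.hasFDerivAt
  -- the quadratic form `f y = ⟨My, y⟩` and its derivative
  set F : (Fin N → ℝ) →L[ℝ] ℝ :=
    ∑ i : Fin N, ((M.mulVec x i) • (ContinuousLinearMap.proj i) +
      ((ContinuousLinearMap.proj i).comp G).smulRight (x i)) with hF_def
  have hf : HasFDerivAt (fun y => M.mulVec y ⬝ᵥ y) F x := by
    have h1 : ∀ i : Fin N, HasFDerivAt (fun y : Fin N → ℝ => M.mulVec y i * y i)
        ((M.mulVec x i) • (ContinuousLinearMap.proj i) +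
          ((ContinuousLinearMap.proj i).comp (G : (Fin N → ℝ) →L[ℝ] (Fin N → ℝ))).smulRight (x i)) x := by
      intro i
      have hb : HasFDerivAt (fun y : Fin N → ℝ => y i)
          (ContinuousLinearMap.proj (R := ℝ) (φ := fun _ : Fin N => ℝ) i) x :=
        (ContinuousLinearMap.proj (R := ℝ) (φ := fun _ : Fin N => ℝ) i).hasFDerivAt
      have hb' : HasFDerivAt (fun y : Fin N → ℝ => y i)
          (ContinuousLinearMap.proj (R := ℝ) (φ := fun _ : Fin N => ℝ) i) (M.mulVec x) :=
        (ContinuousLinearMap.proj (R := ℝ) (φ := fun _ : Fin N => ℝ) i).hasFDerivAt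
      have ha : HasFDerivAt (fun y : Fin N → ℝ => M.mulVec y i)
          ((ContinuousLinearMap.proj i).comp G) x := hb'.comp x hg
      exact ha.mul' hb
    exact HasFDerivAt.fun_sum (u := Finset.univ) (A := fun i (y : Fin N → ℝ) => M.mulVec y i * y i)
      (fun i _ => h1 i)
  have hFapp : ∀ v, F v = M.mulVec x ⬝ᵥ v + x ⬝ᵥ M.mulVec v := by
    intro v
    simp [hF_def, ContinuousLinearMap.sum_apply, dotProduct, Finset.sum_add_distrib, hGapp,
      mul_comm]
  -- derivative of `y ↦ (f y)⁻¹`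
  have hinv : HasFDerivAt (fun y => (M.mulVec y ⬝ᵥ y)⁻¹) ((-(q ^ 2)⁻¹) • F) x := by
    have := (hasDerivAt_inv (x := q) hq.ne').comp_hasFDerivAt x hf
    exact this
  -- derivative of T
  set L : (Fin N → ℝ) →L[ℝ] (Fin N → ℝ) :=
    (q⁻¹) • G + ((-(q ^ 2)⁻¹) • F).smulRight (M.mulVec x) with hL_def
  have hTd : HasFDerivAt T L x := by
    have := hinv.smul hg
    have hTeq : T = fun y => (M.mulVec y ⬝ᵥ y)⁻¹ • M.mulVec y := funext hT
    rw [hTeq]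
    exact this
  have hfd : fderiv ℝ T x = L := hTd.fderiv
  -- the matrix of the derivative
  set A : Matrix (Fin N) (Fin N) ℝ :=
    q⁻¹ • M - (2 * (q ^ 2)⁻¹) • vecMulVec (M.mulVec x) (M.mulVec x) with hA_def
  have hLA : (L : (Fin N → ℝ) →ₗ[ℝ] (Fin N → ℝ)) = Matrix.toLin' A := by
    apply LinearMap.ext
    intro v
    funext i
    have hsym : x ⬝ᵥ M.mulVec v = M.mulVec x ⬝ᵥ v := by
      rw [dotProduct_mulVec, ← Matrix.mulVec_transpose, hsymm]
    have : Matrix.toLin' A v = A.mulVec v := rfl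
    simp only [hL_def, ContinuousLinearMap.coe_coe, ContinuousLinearMap.add_apply,
      ContinuousLinearMap.smul_apply, ContinuousLinearMap.smulRight_apply, this, Matrix.toLin'_apply,
      hA_def, sub_mulVec, Matrix.smul_mulVec, hGapp, hFapp, hsym]
    simp only [Pi.add_apply, Pi.smul_apply, smul_eq_mul, Pi.sub_apply]
    rw [vecMulVec_mulVec_apply]
    ring
  -- compute the determinant of A
  have hfact : A = q⁻¹ • (M * (1 - (2 * q⁻¹) • vecMulVec x (M.mulVec x))) := by
    have hMvv : M * vecMulVec x (M.mulVec x) = vecMulVec (M.mulVec x) (M.mulVec x) := by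
      ext i j
      simp only [Matrix.mul_apply, vecMulVec_apply, Matrix.mulVec, dotProduct]
      rw [Finset.sum_mul]
      congr 1; funext k; ring
    rw [Matrix.mul_sub, Matrix.mul_one, Matrix.mul_smul, hMvv, smul_sub, smul_smul, hA_def]
    congr 1
    congr 1
    field_simp
  have hdetB : (1 - (2 * q⁻¹) • vecMulVec x (M.mulVec x)).det = -1 := by
    have h1 : (1 : Matrix (Fin N) (Fin N) ℝ) - (2 * q⁻¹) • vecMulVec x (M.mulVec x)
        = 1 + Matrix.replicateCol (Fin 1) ((-(2 * q⁻¹)) • x) * Matrix.replicateRow (Fin 1) (M.mulVec x) := by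
      erw [← vecMulVec_eq (Fin 1)]
      ext i j
      simp [vecMulVec_apply, sub_eq_add_neg]
    rw [h1]; erw [det_one_add_replicateCol_mul_replicateRow]
    have : M.mulVec x ⬝ᵥ ((-(2 * q⁻¹)) • x) = -(2 * q⁻¹) * q := by
      simp [dotProduct_smul, hq_def]
    rw [this]
    have hqne : q ≠ 0 := hq.ne'
    field_simp
    ring
  have hdetA : A.det = -(q⁻¹ ^ N * M.det) := by
    rw [hfact, Matrix.det_smul, Matrix.det_mul, hdetB]
    rw [Fintype.card_fin]
    ring
  -- put everything together
  rw [hfd]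
  have hcoe : LinearMap.det (L : (Fin N → ℝ) →ₗ[ℝ] (Fin N → ℝ)) = A.det := by
    rw [hLA, LinearMap.det_toLin']
  rw [hcoe, hdetA]
  have hdetM : 0 < M.det := hM.det_pos
  have hHq : H x ^ (2 * N) = q ^ N := by
    rw [hH, pow_mul]
    congr 1
    rw [Real.sq_sqrt hq.le]
  rw [hHq, abs_neg, abs_mul, abs_pow, abs_of_pos (inv_pos.mpr hq), abs_of_pos hdetM,
    inv_pow, inv_mul_eq_div]
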